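/- Let G be a simple graph and W_G its whisker graph on vertex set V(G) ∪ {y_v : v ∈ V(G)} with whiskers {v, y_v}. If D is a maximal independent set of G, then D is an independent set of W_G and N_{W_G}(D) is a minimal vertex cover of W_G. -/

import Mathlib

open MvPolynomial

namespace PaperRV

variable {V : Type*}

/-- `A` is an independent set of `G`. -/
def IsIndep (G : SimpleGraph V) (A : Set V) : Prop :=
  ∀ u ∈ A, ∀ v ∈ A, ¬ G.Adj u v

/-- The neighbourhood `N_G(A)` of a set of vertices `A`. -/
def nbhd (G : SimpleGraph V) (A : Set V) : Set V :=
  {v | ∃ u ∈ A, G.Adj u v}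

/-- `C` is a vertex cover of `G`. -/
def IsVertexCover (G : SimpleGraph V) (C : Set V) : Prop :=
  ∀ ⦃u v⦄, G.Adj u v → u ∈ C ∨ v ∈ C

/-- The whisker graph `W_G` of `G`: a pendant vertex `Sum.inr v` is attached by an edge
to each vertex `Sum.inl v` of (the copy of) `G`. -/
def whisker (G : SimpleGraph V) : SimpleGraph (V ⊕ V) :=
  SimpleGraph.fromRel (fun a b =>
    (∃ u v, G.Adj u v ∧ a = Sum.inl u ∧ b = Sum.inl v) ∨ (∃ u, a = Sum.inl u ∧ b = Sum.inr u))

lemma adj_inl_inl {G : SimpleGraph V} {u v : V} :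
    (whisker G).Adj (Sum.inl u) (Sum.inl v) ↔ G.Adj u v := by
  simp only [whisker, SimpleGraph.fromRel_adj, Sum.inl.injEq, ne_eq]
  constructor
  · rintro ⟨hne, h⟩
    rcases h with (⟨a,b,hab,ha,hb⟩|⟨a,ha,hb⟩)|(⟨a,b,hab,ha,hb⟩|⟨a,ha,hb⟩) <;> simp_all
    exact hab.symm
  · intro h
    exact ⟨h.ne, Or.inl (Or.inl ⟨u, v, h, rfl, rfl⟩)⟩

lemma adj_inl_inr {G : SimpleGraph V} {u v : V} :
    (whisker G).Adj (Sum.inl u) (Sum.inr v) ↔ u = v := by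
  simp only [whisker, SimpleGraph.fromRel_adj, ne_eq]
  constructor
  · rintro ⟨hne, h⟩
    rcases h with (⟨a,b,hab,ha,hb⟩|⟨a,ha,hb⟩)|(⟨a,b,hab,ha,hb⟩|⟨a,ha,hb⟩) <;> simp_all
  · rintro rfl
    exact ⟨by simp, Or.inl (Or.inr ⟨u, rfl, rfl⟩)⟩

lemma not_adj_inr_inr {G : SimpleGraph V} {u v : V} :
    ¬ (whisker G).Adj (Sum.inr u) (Sum.inr v) := by
  simp only [whisker, SimpleGraph.fromRel_adj, ne_eq]
  rintro ⟨hne, h⟩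
  rcases h with (⟨a,b,hab,ha,hb⟩|⟨a,ha,hb⟩)|(⟨a,b,hab,ha,hb⟩|⟨a,ha,hb⟩) <;> simp_all

/-- If `D` is a maximal independent set of `G`, then (the copy of) `D` is an independent set of
the whisker graph `W_G` and `N_{W_G}(D)` is a minimal vertex cover of `W_G`. -/
theorem stmt7 {V : Type*} (G : SimpleGraph V) (D : Set V) (hD : IsIndep G D)
    (hDmax : ∀ B : Set V, IsIndep G B → D ⊆ B → B = D) :
    IsIndep (whisker G) (Sum.inl '' D) ∧
    IsVertexCover (whisker G) (nbhd (whisker G) (Sum.inl '' D)) ∧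
    ∀ C ⊆ nbhd (whisker G) (Sum.inl '' D), IsVertexCover (whisker G) C →
      C = nbhd (whisker G) (Sum.inl '' D) := by
  -- every vertex outside D has a neighbour in D
  have hcompl : ∀ v, v ∉ D → ∃ u ∈ D, G.Adj u v := by
    intro v hv
    by_contra h
    push_neg at h
    have hB : IsIndep G (D ∪ {v}) := by
      rintro a (ha | rfl) b (hb | rfl)
      · exact hD a ha b hb
      · intro hadj; exact h a ha hadj
      · intro hadj; exact h b hb hadj.symm
      · exact G.loopless.irrefl _
    have := hDmax (D ∪ {v}) hB (Set.subset_union_left)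
    exact hv (this ▸ Set.mem_union_right D rfl)
  -- membership in nbhd
  have hmemL : ∀ v : V, Sum.inl v ∈ nbhd (whisker G) (Sum.inl '' D) ↔ v ∉ D := by
    intro v
    constructor
    · rintro ⟨a, ⟨u, hu, rfl⟩, hadj⟩
      rw [adj_inl_inl] at hadj
      intro hv; exact hD u hu v hv hadj
    · intro hv
      obtain ⟨u, hu, hadj⟩ := hcompl v hv
      exact ⟨Sum.inl u, ⟨u, hu, rfl⟩, adj_inl_inl.mpr hadj⟩
  have hmemR : ∀ v : V, Sum.inr v ∈ nbhd (whisker G) (Sum.inl '' D) ↔ v ∈ D := by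
    intro v
    constructor
    · rintro ⟨a, ⟨u, hu, rfl⟩, hadj⟩
      rw [adj_inl_inr] at hadj
      exact hadj ▸ hu
    · intro hv
      exact ⟨Sum.inl v, ⟨v, hv, rfl⟩, adj_inl_inr.mpr rfl⟩
  refine ⟨?_, ?_, ?_⟩
  · rintro _ ⟨u, hu, rfl⟩ _ ⟨v, hv, rfl⟩
    rw [adj_inl_inl]
    exact hD u hu v hv
  · rintro (u | u) (v | v) hadj
    · rw [adj_inl_inl] at hadj
      by_cases hu : u ∈ D
      · right
        rw [hmemL]
        intro hv; exact hD u hu v hv hadj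
      · left; exact (hmemL u).mpr hu
    · rw [adj_inl_inr] at hadj
      subst hadj
      by_cases hu : u ∈ D
      · right; exact (hmemR u).mpr hu
      · left; exact (hmemL u).mpr hu
    · obtain rfl := adj_inl_inr.mp hadj.symm
      by_cases hu : v ∈ D
      · left; exact (hmemR v).mpr hu
      · right; exact (hmemL v).mpr hu
    · exact absurd hadj not_adj_inr_inr
  · intro C hCsub hC
    refine subset_antisymm hCsub ?_
    rintro (v | v) hx
    · have hv : v ∉ D := (hmemL v).mp hx
      have hedge : (whisker G).Adj (Sum.inl v) (Sum.inr v) := adj_inl_inr.mpr rfl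
      rcases hC hedge with h | h
      · exact h
      · exact absurd ((hmemR v).mp (hCsub h)) hv
    · have hv : v ∈ D := (hmemR v).mp hx
      have hedge : (whisker G).Adj (Sum.inl v) (Sum.inr v) := adj_inl_inr.mpr rfl
      rcases hC hedge with h | h
      · exact absurd hv ((hmemL v).mp (hCsub h))
      · exact h

end PaperRV
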